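/- arXiv:2502.19583 — 2 statements merged into one kernel-verified Lean document; each statement's English description precedes it below -/
import Mathlib

section
/- Backtracking line search terminates: if φ : ℝⁿ → ℝ is differentiable at u, p satisfies ∇φ(u)ᵀp < 0, c ∈ (0,1), and τ ∈ (0,1), then there exists k ∈ ℕ such that the step α = τ^k α₀ satisfies φ(u) - φ(u + α p) ≥ -c α ∇φ(u)ᵀp. -/
open Filter Topology

theorem stmt_5 {n : ℕ}
    (φ : EuclideanSpace ℝ (Fin n) → ℝ) (u p : EuclideanSpace ℝ (Fin n))
    (hφ : DifferentiableAt ℝ φ u)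
    (hdesc : inner ℝ (gradient φ u) p < (0 : ℝ))
    (c τ α₀ : ℝ) (hc : c ∈ Set.Ioo (0 : ℝ) 1) (hτ : τ ∈ Set.Ioo (0 : ℝ) 1)
    (hα₀ : 0 < α₀) :
    ∃ k : ℕ,
      φ u - φ (u + (τ ^ k * α₀) • p) ≥
        -c * (τ ^ k * α₀) * inner ℝ (gradient φ u) p := by
  set D : ℝ := inner ℝ (gradient φ u) p with hD
  set f : ℝ → ℝ := fun α => φ (u + α • p) with hf
  have hline : HasDerivAt (fun α : ℝ => u + α • p) p 0 :=
    by simpa using ((hasDerivAt_id (0 : ℝ)).smul_const p).const_add u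
  have hgrad := hφ.hasGradientAt
  have hFD : HasFDerivAt φ ((InnerProductSpace.toDual ℝ _) (gradient φ u)) u := hgrad
  have hd : HasDerivAt f D 0 := by
    have := (by simpa using hFD : HasFDerivAt φ _ (u + (0:ℝ) • p)).comp_hasDerivAt (0 : ℝ) hline
    have key : fderiv ℝ φ u p = D := by rw [hD, gradient, InnerProductSpace.toDual_symm_apply]
    simpa [hf, InnerProductSpace.toDual_apply_apply, Function.comp_def, key] using this
  have hslope : Tendsto (slope f 0) (𝓝[≠] 0) (𝓝 D) :=
    hasDerivAt_iff_tendsto_slope.mp hd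
  have hDlt : D < c * D := by nlinarith [hc.1, hc.2, hdesc]
  have hev : ∀ᶠ α in 𝓝[≠] (0:ℝ), slope f 0 α < c * D :=
    hslope.eventually (Filter.Tendsto.eventually_lt_const hDlt tendsto_id)
  have hseq : Tendsto (fun k : ℕ => τ ^ k * α₀) atTop (𝓝[≠] 0) := by
    apply tendsto_nhdsWithin_of_tendsto_nhds_of_eventually_within
    · simpa using (tendsto_pow_atTop_nhds_zero_of_lt_one (le_of_lt hτ.1) hτ.2).mul_const α₀
    · filter_upwards with k
      exact ne_of_gt (mul_pos (pow_pos hτ.1 k) hα₀)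
  obtain ⟨k, hk⟩ := (hseq.eventually hev).exists
  refine ⟨k, ?_⟩
  have hαpos : 0 < τ ^ k * α₀ := mul_pos (pow_pos hτ.1 k) hα₀
  rw [slope_def_field] at hk
  have : (f (τ ^ k * α₀) - f 0) / (τ ^ k * α₀ - 0) < c * D := hk
  rw [sub_zero, div_lt_iff₀ hαpos] at this
  have hf0 : f 0 = φ u := by simp [hf]
  have hfα : f (τ ^ k * α₀) = φ (u + (τ ^ k * α₀) • p) := rfl
  nlinarith [this]
end

section
/- Least-change property of the Broyden update: among all matrices M ∈ ℝ^{n×n} satisfying the secant equation M s = y (with s ≠ 0), the Broyden update B' = B + ((y - Bs)sᵀ)/(sᵀs) minimizes the Frobenius norm ‖M - B‖_F; that is, ‖B' - B‖_F ≤ ‖M - B‖_F for all M with M s = y. -/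
open Matrix

/-- Frobenius norm of a real square matrix. -/
noncomputable def frobNorm {n : ℕ} (A : Matrix (Fin n) (Fin n) ℝ) : ℝ :=
  Real.sqrt (∑ i, ∑ j, (A i j) ^ 2)

theorem stmt_8 {n : ℕ} (B : Matrix (Fin n) (Fin n) ℝ) (s y : Fin n → ℝ)
    (hs : s ≠ 0) :
    ∀ M : Matrix (Fin n) (Fin n) ℝ, M *ᵥ s = y →
      frobNorm ((B + (s ⬝ᵥ s)⁻¹ • Matrix.vecMulVec (y - B *ᵥ s) s) - B) ≤
        frobNorm (M - B) := by
  intro M hM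
  unfold frobNorm
  apply Real.sqrt_le_sqrt
  set E : Matrix (Fin n) (Fin n) ℝ := M - B with hE
  have hv : y - B *ᵥ s = E *ᵥ s := by
    rw [hE, sub_mulVec, hM]
  have hP : (0:ℝ) < s ⬝ᵥ s := by
    rcases Function.ne_iff.mp hs with ⟨i, hi⟩
    have : (0:ℝ) < ∑ j, s j * s j := by
      apply Finset.sum_pos' (fun j _ => mul_self_nonneg _)
      exact ⟨i, Finset.mem_univ i, mul_self_pos.mpr hi⟩
    simpa [dotProduct] using this
  set P : ℝ := s ⬝ᵥ s with hPdef
  have hPs : P = ∑ j, (s j) ^ 2 := by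
    simp [hPdef, dotProduct, sq]
  have hentry : ∀ i j,
      ((B + P⁻¹ • Matrix.vecMulVec (y - B *ᵥ s) s) - B) i j
        = P⁻¹ * ((E *ᵥ s) i * s j) := by
    intro i j
    simp [hv, Matrix.vecMulVec_apply, Matrix.add_apply, Matrix.sub_apply]
  calc ∑ i, ∑ j, (((B + P⁻¹ • Matrix.vecMulVec (y - B *ᵥ s) s) - B) i j) ^ 2
      = ∑ i, ∑ j, (P⁻¹)^2 * ((E *ᵥ s) i)^2 * (s j)^2 := by
        refine Finset.sum_congr rfl fun i _ => Finset.sum_congr rfl fun j _ => ?_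
        rw [hentry]; ring
    _ = (P⁻¹)^2 * (∑ i, ((E *ᵥ s) i)^2) * P := by
        rw [hPs, mul_assoc, Finset.sum_mul_sum, Finset.mul_sum]
        refine Finset.sum_congr rfl fun i _ => ?_
        rw [Finset.mul_sum]
        exact Finset.sum_congr rfl fun j _ => by ring
    _ ≤ ∑ i, ∑ j, (E i j) ^ 2 := by
        have hCS : ∑ i, ((E *ᵥ s) i)^2 ≤ (∑ i, ∑ j, (E i j)^2) * P := by
          rw [hPs, Finset.sum_mul]
          apply Finset.sum_le_sum
          intro i _
          simpa [Matrix.mulVec, dotProduct] using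
            Finset.sum_mul_sq_le_sq_mul_sq Finset.univ (E i) s
        have h2 : (P⁻¹)^2 * (∑ i, ((E *ᵥ s) i)^2) * P
            ≤ (P⁻¹)^2 * ((∑ i, ∑ j, (E i j)^2) * P) * P :=
          mul_le_mul_of_nonneg_right
            (mul_le_mul_of_nonneg_left hCS (by positivity)) hP.le
        refine le_trans h2 (le_of_eq ?_)
        field_simp
end
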